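/- Define t_n^{(r)} = r · ((r-1)n)! / ((n-1)! · ((r-2)n + 2)!). For all integers n ≥ 1 and r ≥ 3, t_n^{(r)} ≤ ((r-1)^(r-1) / (r-2)^(r-2))^(n-1). -/

import Mathlib

open Finset

-- ∏ (1+x) ≥ 1 + ∑ x for nonneg x
lemma aux1 (s : Finset ℕ) (x : ℕ → ℝ) (hx : ∀ i ∈ s, 0 ≤ x i) :
    1 + ∑ i ∈ s, x i ≤ ∏ i ∈ s, (1 + x i) := by
  classical
  induction s using Finset.induction_on with
  | empty => simp
  | insert _ _ ha ih =>
    rename_i a s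
    rw [Finset.sum_insert ha, Finset.prod_insert ha]
    have h1 : ∀ i ∈ s, 0 ≤ x i := fun i hi => hx i (mem_insert_of_mem hi)
    have h2 := ih h1
    have hxa : 0 ≤ x a := hx a (mem_insert_self a s)
    have hS : 0 ≤ ∑ i ∈ s, x i := Finset.sum_nonneg h1
    nlinarith [Finset.sum_nonneg h1]

lemma aux2 (s : Finset ℕ) (f g : ℕ → ℝ) (M : ℝ) (hM : 0 < M)
    (hf : ∀ i ∈ s, 0 < f i) (hfM : ∀ i ∈ s, f i ≤ M) (hg : ∀ i ∈ s, 0 ≤ g i) :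
    (1 + (∑ i ∈ s, g i) / M) * ∏ i ∈ s, f i ≤ ∏ i ∈ s, (f i + g i) := by
  have h1 : (1 + (∑ i ∈ s, g i) / M) * ∏ i ∈ s, f i
      ≤ (∏ i ∈ s, (1 + g i / M)) * ∏ i ∈ s, f i := by
    apply mul_le_mul_of_nonneg_right
    · rw [Finset.sum_div] at *
      exact aux1 s (fun i => g i / M) (fun i hi => div_nonneg (hg i hi) hM.le)
    · exact Finset.prod_nonneg fun i hi => (hf i hi).le
  refine h1.trans ?_
  rw [← Finset.prod_mul_distrib]
  apply Finset.prod_le_prod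
  · intro i hi
    have h6 : 0 ≤ g i / M := div_nonneg (hg i hi) hM.le
    have h8 := (hf i hi).le
    nlinarith
  · intro i hi
    have h3 := hfM i hi
    have h4 := hg i hi
    have h5 := (hf i hi).le
    rw [add_mul, one_mul, div_mul_eq_mul_div, add_le_add_iff_left, div_le_iff₀ hM]
    nlinarith

lemma fact_prod (m c : ℕ) :
    Nat.factorial (m + c) = Nat.factorial m * ∏ k ∈ range c, (m + k + 1) := by
  induction c with
  | zero => simp
  | succ c ih =>
    rw [Finset.prod_range_succ, ← add_assoc, Nat.factorial_succ, ih]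
    ring

lemma key (m n : ℕ) (hn : 1 ≤ n) :
    ((m:ℝ)+1)^(m+1) * ∏ k ∈ range (m+2), (((m:ℝ)+2)*(n:ℝ) + (k:ℝ) + 1)
      ≤ ((m:ℝ)+2)^(m+2) * (n:ℝ) * ∏ k ∈ range (m+1), (((m:ℝ)+1)*(n:ℝ) + (k:ℝ) + 3) := by
  have hn1 : (1:ℝ) ≤ (n:ℝ) := by exact_mod_cast hn
  set F : ℕ → ℝ := fun k => ((m:ℝ)+1) * (((m:ℝ)+2)*(n:ℝ) + (k:ℝ) + 1) with hF
  set g : ℕ → ℝ := fun k => (k:ℝ) + 1 + 2*((m:ℝ)+2) with hg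
  set M : ℝ := ((m:ℝ)+1) * (((m:ℝ)+2)*(n:ℝ) + (m:ℝ) + 1) with hM
  have hMpos : 0 < M := by rw [hM]; positivity
  have hf : ∀ i ∈ range (m+1), 0 < F i := by
    intro i hi; simp only [hF]; positivity
  have hfM : ∀ i ∈ range (m+1), F i ≤ M := by
    intro i hi
    simp only [mem_range] at hi
    have him : (i:ℝ) ≤ (m:ℝ) := by exact_mod_cast Nat.lt_succ_iff.mp hi
    simp only [hF, hM]
    nlinarith
  have hgpos : ∀ i ∈ range (m+1), 0 ≤ g i := by
    intro i hi; simp only [hg]; positivity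
  have h2 := aux2 (range (m+1)) F g M hMpos hf hfM hgpos
  have hFg : ∏ i ∈ range (m+1), (F i + g i)
      = ∏ k ∈ range (m+1), (((m:ℝ)+2) * (((m:ℝ)+1)*(n:ℝ) + (k:ℝ) + 3)) := by
    apply Finset.prod_congr rfl
    intro k hk
    simp only [hF, hg]; ring
  have hSge : ((m:ℝ)+1) * (2*(m:ℝ)+5) ≤ ∑ i ∈ range (m+1), g i := by
    have h := Finset.card_nsmul_le_sum (range (m+1)) g (2*(m:ℝ)+5) ?_
    · rw [Finset.card_range, nsmul_eq_mul] at h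
      push_cast at h ⊢
      linarith
    · intro i hi
      simp only [hg]
      have : (0:ℝ) ≤ (i:ℝ) := by positivity
      linarith
  set S := ∑ i ∈ range (m+1), g i with hS
  have hPnn : 0 ≤ ∏ i ∈ range (m+1), F i :=
    Finset.prod_nonneg fun i hi => (hf i hi).le
  have h3 : (1:ℝ) ≤ (n:ℝ) * (S / M) := by
    rw [← mul_div_assoc, le_div_iff₀ hMpos, one_mul]
    simp only [hM]
    have hm : (0:ℝ) ≤ (m:ℝ) := by positivity
    nlinarith [mul_le_mul_of_nonneg_left hSge (by positivity : (0:ℝ) ≤ (n:ℝ)), hn1, hm,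
      mul_le_mul_of_nonneg_left hn1 (show (0:ℝ) ≤ ((m:ℝ)+1)*((m:ℝ)+3) by positivity)]
  have hA : (n:ℝ) * ((1 + S / M) * ∏ i ∈ range (m+1), F i)
      ≤ (n:ℝ) * ∏ i ∈ range (m+1), (F i + g i) :=
    mul_le_mul_of_nonneg_left h2 (by positivity)
  have hB : 1 * ∏ i ∈ range (m+1), F i
      ≤ ((n:ℝ) * (S / M)) * ∏ i ∈ range (m+1), F i :=
    mul_le_mul_of_nonneg_right h3 hPnn
  have hmain : ((n:ℝ)+1) * ∏ i ∈ range (m+1), F i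
      ≤ (n:ℝ) * ∏ i ∈ range (m+1), (F i + g i) := by nlinarith [hA, hB]
  have e1 : ∏ k ∈ range (m+2), (((m:ℝ)+2)*(n:ℝ) + (k:ℝ) + 1)
      = (∏ k ∈ range (m+1), (((m:ℝ)+2)*(n:ℝ) + (k:ℝ) + 1)) * (((m:ℝ)+2)*((n:ℝ)+1)) := by
    rw [Finset.prod_range_succ]
    push_cast
    ring
  have e2 : ∏ i ∈ range (m+1), F i
      = ((m:ℝ)+1)^(m+1) * ∏ k ∈ range (m+1), (((m:ℝ)+2)*(n:ℝ) + (k:ℝ) + 1) := by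
    simp only [hF]
    rw [Finset.prod_mul_distrib, Finset.prod_const, Finset.card_range]
  have e3 : ∏ k ∈ range (m+1), (((m:ℝ)+2) * (((m:ℝ)+1)*(n:ℝ) + (k:ℝ) + 3))
      = ((m:ℝ)+2)^(m+1) * ∏ k ∈ range (m+1), (((m:ℝ)+1)*(n:ℝ) + (k:ℝ) + 3) := by
    rw [Finset.prod_mul_distrib, Finset.prod_const, Finset.card_range]
  calc ((m:ℝ)+1)^(m+1) * ∏ k ∈ range (m+2), (((m:ℝ)+2)*(n:ℝ) + (k:ℝ) + 1)
      = ((m:ℝ)+2) * (((n:ℝ)+1) * ∏ i ∈ range (m+1), F i) := by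
        rw [e1, e2]; ring
    _ ≤ ((m:ℝ)+2) * ((n:ℝ) * ∏ i ∈ range (m+1), (F i + g i)) :=
        mul_le_mul_of_nonneg_left hmain (by positivity)
    _ = ((m:ℝ)+2)^(m+2) * (n:ℝ) * ∏ k ∈ range (m+1), (((m:ℝ)+1)*(n:ℝ) + (k:ℝ) + 3) := by
        rw [hFg, e3]; ring

theorem stmt_5 (n r : ℕ) (hn : 1 ≤ n) (hr : 3 ≤ r) :
    (r : ℝ) * (Nat.factorial ((r - 1) * n) : ℝ) /
        ((Nat.factorial (n - 1) : ℝ) * (Nat.factorial ((r - 2) * n + 2) : ℝ))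
      ≤ (((r - 1 : ℕ) : ℝ) ^ (r - 1) / ((r - 2 : ℕ) : ℝ) ^ (r - 2)) ^ (n - 1) := by
  obtain ⟨m, rfl⟩ : ∃ m, r = m + 3 := ⟨r - 3, by omega⟩
  have e1 : m + 3 - 1 = m + 2 := by omega
  have e2 : m + 3 - 2 = m + 1 := by omega
  rw [e1, e2]
  induction n, hn using Nat.le_induction with
  | base =>
    have e3 : (m+1)*1+2 = (m+2)+1 := by ring
    have e4 : (m+2)*1 = m+2 := by ring
    rw [e3, e4, Nat.factorial_succ (m+2)]
    norm_num
    rw [show ((m:ℝ)+2+1) = ((m:ℝ)+3) by ring, div_self (by positivity)]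
  | succ n hn ih =>
    simp only [Nat.add_sub_cancel]
    push_cast at ih ⊢
    set P : ℝ := ∏ k ∈ range (m+2), (((m:ℝ)+2)*(n:ℝ) + (k:ℝ) + 1) with hPdef
    set Q : ℝ := ∏ k ∈ range (m+1), (((m:ℝ)+1)*(n:ℝ) + (k:ℝ) + 3) with hQdef
    have A' : (Nat.factorial ((m+2)*(n+1)) : ℝ) = (Nat.factorial ((m+2)*n) : ℝ) * P := by
      have hA : (m+2)*(n+1) = (m+2)*n + (m+2) := by ring
      rw [hA, fact_prod, Nat.cast_mul, Nat.cast_prod, hPdef]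
      congr 1
      apply Finset.prod_congr rfl
      intro k hk
      push_cast
      ring
    have B' : (Nat.factorial ((m+1)*(n+1)+2) : ℝ)
        = (Nat.factorial ((m+1)*n+2) : ℝ) * Q := by
      have hB : (m+1)*(n+1)+2 = ((m+1)*n+2) + (m+1) := by ring
      rw [hB, fact_prod, Nat.cast_mul, Nat.cast_prod, hQdef]
      congr 1
      apply Finset.prod_congr rfl
      intro k hk
      push_cast
      ring
    have C' : (Nat.factorial n : ℝ) = (n:ℝ) * (Nat.factorial (n-1) : ℝ) := by
      rw [← Nat.mul_factorial_pred (show n ≠ 0 by omega)]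
      push_cast
      ring
    have hn0 : (0:ℝ) < (n:ℝ) := by exact_mod_cast hn
    have hQpos : 0 < Q := by
      rw [hQdef]
      apply Finset.prod_pos
      intro i hi
      positivity
    have hPpos : 0 < P := by
      rw [hPdef]
      apply Finset.prod_pos
      intro i hi
      positivity
    have hf1 : (0:ℝ) < (Nat.factorial ((m+2)*n) : ℝ) := by
      exact_mod_cast Nat.factorial_pos _
    have hf2 : (0:ℝ) < (Nat.factorial (n-1) : ℝ) := by
      exact_mod_cast Nat.factorial_pos _
    have hf3 : (0:ℝ) < (Nat.factorial ((m+1)*n+2) : ℝ) := by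
      exact_mod_cast Nat.factorial_pos _
    set K : ℝ := ((m:ℝ)+2)^(m+2) / ((m:ℝ)+1)^(m+1) with hKdef
    have hK0 : (0:ℝ) ≤ K := by positivity
    have hKpow : K * K^(n-1) = K^n := by
      rw [← pow_succ']
      congr 1
      omega
    have hratio : P / ((n:ℝ) * Q) ≤ K := by
      rw [div_le_iff₀ (by positivity), hKdef, div_mul_eq_mul_div,
        le_div_iff₀ (by positivity : (0:ℝ) < ((m:ℝ)+1)^(m+1))]
      nlinarith [key m n hn]
    calc ((m:ℝ)+3) * (Nat.factorial ((m+2)*(n+1)) : ℝ) /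
          ((Nat.factorial n : ℝ) * (Nat.factorial ((m+1)*(n+1)+2) : ℝ))
        = (((m:ℝ)+3) * (Nat.factorial ((m+2)*n) : ℝ) /
            ((Nat.factorial (n-1) : ℝ) * (Nat.factorial ((m+1)*n+2) : ℝ)))
            * (P / ((n:ℝ) * Q)) := by
          rw [A', B', C']
          field_simp
      _ ≤ (((m:ℝ)+3) * (Nat.factorial ((m+2)*n) : ℝ) /
            ((Nat.factorial (n-1) : ℝ) * (Nat.factorial ((m+1)*n+2) : ℝ))) * K := by
          apply mul_le_mul_of_nonneg_left hratio
          positivity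
      _ ≤ K^(n-1) * K := by
          apply mul_le_mul_of_nonneg_right _ hK0
          exact ih
      _ = K^n := by rw [mul_comm, hKpow]
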